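/- Let d ≥ 2, let B ⊂ ℝ^d be a bounded star-shaped body with vol(B) > 0, and suppose there exist constants C₀ > 0, 1 < α < d, β ≥ 0 and R₀ ≥ 2 such that |#(RB ∩ ℤ^d) − vol(B) R^d| ≤ C₀ R^α (log R)^β for all R ≥ R₀. Then there exists a constant C₁, depending only on α, β, d, vol(B) and C₀, such that |#(RB ∩ Ẑ^d) − (vol(B)/ζ(d)) R^d| ≤ C₁ R^α (log R)^β for all R ≥ R₀, where Ẑ^d is the set of primitive integer vectors and ζ is the Riemann zeta function. -/

import Mathlib

open MeasureTheory Pointwise ArithmeticFunction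
open scoped ArithmeticFunction.Moebius ArithmeticFunction.zeta
lemma aux_mz (d : ℕ) (hd : 2 ≤ d) :
    (∑' n : ℕ, ((μ n : ℝ) / (n:ℝ) ^ d)) * (∑' n : ℕ, 1 / ((n:ℝ)+1) ^ d) = 1 := by
  have hre : 1 < ((d : ℂ)).re := by
    simp only [Complex.natCast_re]
    exact_mod_cast by omega
  have hmu : LSeries (fun n => (μ n : ℂ)) (d : ℂ) = ((∑' n : ℕ, ((μ n : ℝ) / (n:ℝ) ^ d) : ℝ) : ℂ) := by
    rw [Complex.ofReal_tsum]
    refine tsum_congr fun n => ?_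
    rcases eq_or_ne n 0 with rfl | hn
    · simp [LSeries.term]
    · simp only [LSeries.term, hn, if_false, Complex.cpow_natCast]
      push_cast
      ring
  have hz : LSeries (fun n => ((ζ n : ℕ) : ℂ)) (d : ℂ) = ((∑' n : ℕ, 1 / ((n:ℝ)+1) ^ d : ℝ) : ℂ) := by
    rw [LSeries_zeta_eq_riemannZeta hre, zeta_eq_tsum_one_div_nat_add_one_cpow hre,
      Complex.ofReal_tsum]
    refine tsum_congr fun n => ?_
    rw [Complex.cpow_natCast]
    push_cast
    ring
  have := LSeries_zeta_mul_Lseries_moebius hre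
  rw [hmu, hz] at this
  have h2 : (((∑' n : ℕ, 1 / ((n:ℝ)+1) ^ d) * (∑' n : ℕ, ((μ n : ℝ) / (n:ℝ) ^ d)) : ℝ) : ℂ) = ((1:ℝ):ℂ) := by
    rw [Complex.ofReal_mul, Complex.ofReal_one]
    exact this
  rw [mul_comm]
  exact_mod_cast h2

lemma aux_tail (d N : ℕ) (hd : 2 ≤ d) (hN : 2 ≤ N) :
    ∑' i : ℕ, 1/((i:ℝ)+N)^d ≤ 2/(N:ℝ)^(d-1) := by
  have hNR : (2:ℝ) ≤ N := by exact_mod_cast hN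
  have hsum : Summable (fun i : ℕ => 1/((i:ℝ)+N)^d) := by
    have : Summable (fun n : ℕ => 1 / (n:ℝ) ^ d) := Real.summable_one_div_nat_pow.mpr (by omega)
    have := (summable_nat_add_iff N).mpr this
    refine this.congr fun i => by push_cast; ring
  refine Summable.tsum_le_of_sum_range_le hsum fun n => ?_
  · have key : ∀ i : ℕ, 1/((i:ℝ)+N)^d ≤ (1/(N:ℝ)^(d-2)) *
        (1/((i:ℝ)+(N:ℝ)-1) - 1/(((i+1):ℕ)+(N:ℝ)-1)) := by
      intro i
      have hx : (2:ℝ) ≤ (i:ℝ)+N := by have := Nat.cast_nonneg (α:=ℝ) i; linarith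
      have hx1 : (0:ℝ) < (i:ℝ)+N-1 := by linarith
      have hx0 : (0:ℝ) < (i:ℝ)+N := by linarith
      have hdiff : 1/((i:ℝ)+(N:ℝ)-1) - 1/(((i+1):ℕ)+(N:ℝ)-1) = 1/(((i:ℝ)+N-1)*((i:ℝ)+N)) := by
        push_cast
        rw [div_sub_div _ _ (by linarith) (by linarith)]
        ring_nf
      rw [hdiff]
      have hpow : ((i:ℝ)+N)^d = ((i:ℝ)+N)^(d-2) * ((i:ℝ)+N)^2 := by
        rw [← pow_add]; congr 1; omega
      have h1 : (N:ℝ)^(d-2) * (((i:ℝ)+N-1)*((i:ℝ)+N)) ≤ ((i:ℝ)+N)^d := by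
        rw [hpow]
        have e1 : (N:ℝ)^(d-2) ≤ ((i:ℝ)+N)^(d-2) :=
          pow_le_pow_left₀ (by positivity) (by linarith) _
        have e2 : ((i:ℝ)+N-1)*((i:ℝ)+N) ≤ ((i:ℝ)+N)^2 := by nlinarith
        have := mul_le_mul e1 e2 (by positivity) (by positivity)
        linarith
      rw [div_mul_div_comm, one_mul]
      apply one_div_le_one_div_of_le (by positivity) h1
    calc ∑ i ∈ Finset.range n, 1/((i:ℝ)+N)^d
        ≤ ∑ i ∈ Finset.range n, (1/(N:ℝ)^(d-2)) *
            (1/((i:ℝ)+(N:ℝ)-1) - 1/(((i+1):ℕ)+(N:ℝ)-1)) :=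
          Finset.sum_le_sum fun i _ => key i
      _ = (1/(N:ℝ)^(d-2)) * (1/((0:ℕ)+(N:ℝ)-1) - 1/((n:ℕ)+(N:ℝ)-1)) := by
          rw [← Finset.mul_sum, Finset.sum_range_sub' (fun i : ℕ => 1/((i:ℝ)+(N:ℝ)-1))]
      _ ≤ (1/(N:ℝ)^(d-2)) * (2/(N:ℝ)) := by
          have h1 : (0:ℝ) < (N:ℝ)-1 := by linarith
          have h2 : (0:ℝ) ≤ 1/((n:ℕ)+(N:ℝ)-1) := by
            have : (0:ℝ) < (n:ℕ)+(N:ℝ)-1 := by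
              have : (0:ℝ) ≤ (n:ℕ) := Nat.cast_nonneg n
              linarith
            positivity
          have h3 : 1/((N:ℝ)-1) ≤ 2/(N:ℝ) := by
            rw [div_le_div_iff₀ h1 (by linarith)]
            nlinarith
          have : 1/((0:ℕ)+(N:ℝ)-1) - 1/((n:ℕ)+(N:ℝ)-1) ≤ 2/(N:ℝ) := by
            push_cast
            calc 1/((0:ℝ)+(N:ℝ)-1) - 1/((n:ℝ)+(N:ℝ)-1) ≤ 1/((N:ℝ)-1) := by
                  rw [zero_add]; linarith [h2]
              _ ≤ 2/(N:ℝ) := h3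
          have hpos : (0:ℝ) ≤ 1/(N:ℝ)^(d-2) := by positivity
          calc (1/(N:ℝ)^(d-2)) * (1/((0:ℕ)+(N:ℝ)-1) - 1/((n:ℕ)+(N:ℝ)-1))
              ≤ (1/(N:ℝ)^(d-2)) * (2/(N:ℝ)) := by
                apply mul_le_mul_of_nonneg_left _ hpos
                convert this using 2 <;> push_cast <;> ring
          _ = _ := rfl
      _ = 2/(N:ℝ)^(d-1) := by
          rw [div_mul_div_comm, one_mul]
          congr 1
          rw [← pow_succ]
          congr 1
          omega

lemma aux_fsummable (d : ℕ) (hd : 2 ≤ d) :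
    Summable (fun k : ℕ => (μ k : ℝ)/(k:ℝ)^d) := by
  have hb : Summable (fun k : ℕ => 1/(k:ℝ)^d) := Real.summable_one_div_nat_pow.mpr (by omega)
  have habs : ∀ k : ℕ, |(μ k : ℝ)/(k:ℝ)^d| ≤ 1/(k:ℝ)^d := by
    intro k
    rcases eq_or_ne k 0 with rfl | hk
    · simp
    · rw [abs_div, abs_of_nonneg (by positivity : (0:ℝ) ≤ (k:ℝ)^d)]
      apply div_le_div_of_nonneg_right _ (by positivity)
      exact_mod_cast (abs_moebius_le_one (n := k))
  exact (Summable.of_nonneg_of_le (fun k => abs_nonneg _) habs hb).of_abs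

lemma aux_mtail (d N : ℕ) (hd : 2 ≤ d) (hN : 2 ≤ N) :
    |(∑' k : ℕ, (μ k : ℝ)/(k:ℝ)^d) - ∑ k ∈ Finset.range N, (μ k : ℝ)/(k:ℝ)^d|
      ≤ 2/(N:ℝ)^(d-1) := by
  have hf := aux_fsummable d hd
  have hb : Summable (fun i : ℕ => 1/((i:ℝ)+N)^d) := by
    have : Summable (fun n : ℕ => 1 / (n:ℝ) ^ d) := Real.summable_one_div_nat_pow.mpr (by omega)
    exact ((summable_nat_add_iff N).mpr this).congr fun i => by push_cast; ring
  have hsplit := Summable.sum_add_tsum_nat_add (f := fun k : ℕ => (μ k : ℝ)/(k:ℝ)^d) N hf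
  have : (∑' k : ℕ, (μ k : ℝ)/(k:ℝ)^d) - ∑ k ∈ Finset.range N, (μ k : ℝ)/(k:ℝ)^d
      = ∑' i : ℕ, (μ (i+N) : ℝ)/((i+N:ℕ):ℝ)^d := by
    rw [← hsplit]; ring
  rw [this]
  have hterm : ∀ i : ℕ, |(μ (i+N) : ℝ)/((i+N:ℕ):ℝ)^d| ≤ 1/((i:ℝ)+N)^d := by
    intro i
    have h1 : ((i+N:ℕ):ℝ) = (i:ℝ)+N := by push_cast; ring
    rw [abs_div, h1, abs_of_nonneg (by positivity : (0:ℝ) ≤ ((i:ℝ)+N)^d)]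
    apply div_le_div_of_nonneg_right _ (by positivity)
    exact_mod_cast (abs_moebius_le_one (n := i+N))
  calc |∑' i : ℕ, (μ (i+N) : ℝ)/((i+N:ℕ):ℝ)^d|
      ≤ ∑' i : ℕ, |(μ (i+N) : ℝ)/((i+N:ℕ):ℝ)^d| := by
        have hs2 : Summable (fun i : ℕ => |(μ (i+N) : ℝ)/((i+N:ℕ):ℝ)^d|) :=
          (hf.comp_injective (add_left_injective N)).abs
        have := norm_tsum_le_tsum_norm (f := fun i : ℕ => (μ (i+N) : ℝ)/((i+N:ℕ):ℝ)^d)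
          (by simpa only [Real.norm_eq_abs] using hs2)
        simpa only [Real.norm_eq_abs] using this
    _ ≤ ∑' i : ℕ, 1/((i:ℝ)+N)^d := by
        exact Summable.tsum_le_tsum hterm ((hf.comp_injective (add_left_injective N)).abs) hb
    _ ≤ 2/(N:ℝ)^(d-1) := aux_tail d N hd hN

private lemma ncard_biUnion' {V : Type*} (s : Finset ℕ) (A : ℕ → Set V)
    (hfin : ∀ k ∈ s, (A k).Finite)
    (hdisj : ∀ k ∈ s, ∀ l ∈ s, k ≠ l → Disjoint (A k) (A l)) :
    (⋃ k ∈ s, A k).ncard = ∑ k ∈ s, (A k).ncard := by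
  classical
  induction s using Finset.induction_on with
  | empty => simp
  | @insert a s ha ih =>
    rw [Finset.set_biUnion_insert, Finset.sum_insert ha]
    have hfinU : (⋃ k ∈ s, A k).Finite :=
      Set.Finite.biUnion s.finite_toSet (fun k hk => hfin k (Finset.mem_insert_of_mem hk))
    have hdisjU : Disjoint (A a) (⋃ k ∈ s, A k) := by
      rw [Set.disjoint_iUnion_right]
      intro k
      rw [Set.disjoint_iUnion_right]
      intro hk
      exact hdisj a (Finset.mem_insert_self a s) k (Finset.mem_insert_of_mem hk)
        (fun h => ha (h ▸ hk))
    rw [Set.ncard_union_eq hdisjU (hfin a (Finset.mem_insert_self a s)) hfinU]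
    rw [ih (fun k hk => hfin k (Finset.mem_insert_of_mem hk))
      (fun k hk l hl => hdisj k (Finset.mem_insert_of_mem hk) l (Finset.mem_insert_of_mem hl))]

private lemma gcd_smul' {d : ℕ} (k : ℕ) (y : Fin d → ℤ) :
    Finset.univ.gcd (fun i => (((k:ℤ) * y i)).natAbs)
      = k * Finset.univ.gcd (fun i => (y i).natAbs) := by
  have h : (fun i : Fin d => (((k:ℤ) * y i)).natAbs) = fun i => k * (y i).natAbs := by
    funext i; rw [Int.natAbs_mul]; simp
  rw [h]
  simpa using Finset.gcd_mul_left (s := (Finset.univ : Finset (Fin d)))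
    (f := fun i => (y i).natAbs) (a := k)

section comb
variable {d : ℕ} {B : Set (Fin d → ℝ)} {M : ℝ}

private def latF (d : ℕ) (B : Set (Fin d → ℝ)) (r : ℝ) : Set (Fin d → ℤ) :=
  {x | (fun i => (x i : ℝ)) ∈ r • B}

private def latR (d : ℕ) (B : Set (Fin d → ℝ)) (r : ℝ) : Set (Fin d → ℤ) :=
  {x | x ≠ 0 ∧ (fun i => (x i : ℝ)) ∈ r • B}

private def primR (d : ℕ) (B : Set (Fin d → ℝ)) (r : ℝ) : Set (Fin d → ℤ) :=
  {x | x ≠ 0 ∧ Finset.univ.gcd (fun i => (x i).natAbs) = 1 ∧ (fun i => (x i : ℝ)) ∈ r • B}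

private lemma scale_mem (B : Set (Fin d → ℝ)) (r : ℝ) {k : ℕ} (hk : 0 < k) (y : Fin d → ℤ) :
    (fun i => ((((k:ℤ) * y i : ℤ)) : ℝ)) ∈ r • B ↔ (fun i => (y i : ℝ)) ∈ (r / k) • B := by
  have hk' : (k:ℝ) ≠ 0 := Nat.cast_ne_zero.mpr hk.ne'
  have h1 : (fun i => ((((k:ℤ) * y i : ℤ)) : ℝ)) = (k:ℝ) • (fun i => (y i : ℝ)) := by
    funext i; simp only [Pi.smul_apply, smul_eq_mul]; push_cast; ring
  have h2 : r • B = (k:ℝ) • ((r / k) • B) := by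
    rw [smul_smul, mul_div_cancel₀ _ hk']
  rw [h1, h2]
  exact Set.smul_mem_smul_set_iff₀ hk' _ _

private lemma coord_bound (hM : ∀ b ∈ B, ‖b‖ ≤ M) {r : ℝ} (hr : 0 ≤ r)
    {x : Fin d → ℤ} (hx : x ∈ latF d B r) (i : Fin d) : |(x i : ℝ)| ≤ r * M := by
  obtain ⟨b, hb, hrb⟩ := hx
  have : (x i : ℝ) = r * b i := by
    have := congrFun hrb i
    simpa using this.symm
  rw [this, abs_mul, abs_of_nonneg hr]
  have hbi : |b i| ≤ ‖b‖ := by simpa [Real.norm_eq_abs] using norm_le_pi_norm b i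
  exact mul_le_mul_of_nonneg_left (hbi.trans (hM b hb)) hr

private lemma latF_subset_box (hM : ∀ b ∈ B, ‖b‖ ≤ M) {r : ℝ} (hr : 0 ≤ r) :
    latF d B r ⊆ Set.Icc (fun _ => -(⌈r*M⌉ : ℤ)) (fun _ => (⌈r*M⌉ : ℤ)) := by
  intro x hx
  constructor <;> intro i
  · have := coord_bound hM hr hx i
    have h2 : -(r*M) ≤ (x i : ℝ) := by cases abs_le.mp this; assumption
    have h3 : (-(⌈r*M⌉:ℤ) : ℝ) ≤ (x i : ℝ) := by
      push_cast
      exact le_trans (neg_le_neg (Int.le_ceil _)) h2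
    exact_mod_cast h3
  · have := coord_bound hM hr hx i
    have h2 : (x i : ℝ) ≤ r*M := (abs_le.mp this).2
    have h3 : (x i : ℝ) ≤ ((⌈r*M⌉:ℤ) : ℝ) := le_trans h2 (Int.le_ceil _)
    exact_mod_cast h3

private lemma latF_finite (hM : ∀ b ∈ B, ‖b‖ ≤ M) {r : ℝ} (hr : 0 ≤ r) :
    (latF d B r).Finite :=
  (Set.finite_Icc _ _).subset (latF_subset_box hM hr)

private lemma latR_subset : latR d B r ⊆ latF d B r := fun x hx => hx.2
private lemma primR_subset : primR d B r ⊆ latR d B r := fun x hx => ⟨hx.1, hx.2.2⟩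

private lemma latR_finite (hM : ∀ b ∈ B, ‖b‖ ≤ M) {r : ℝ} (hr : 0 ≤ r) :
    (latR d B r).Finite := (latF_finite hM hr).subset latR_subset

private lemma primR_finite (hM : ∀ b ∈ B, ‖b‖ ≤ M) {r : ℝ} (hr : 0 ≤ r) :
    (primR d B r).Finite := (latR_finite hM hr).subset primR_subset

private lemma latF_card (hM : ∀ b ∈ B, ‖b‖ ≤ M) {r : ℝ} (hr : 0 ≤ r) :
    Nat.card (latF d B r) ≤ (2 * (⌈r*M⌉).toNat + 1) ^ d := by
  have h1 : Nat.card (latF d B r) ≤ Nat.card (Set.Icc (fun _ => -(⌈r*M⌉ : ℤ)) (fun _ => (⌈r*M⌉ : ℤ)) : Set (Fin d → ℤ)) := by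
    apply Nat.card_mono (Set.finite_Icc _ _) (latF_subset_box hM hr)
  refine h1.trans ?_
  rw [Nat.card_coe_set_eq, ← Finset.coe_Icc, Set.ncard_coe_finset]
  rw [Pi.card_Icc]
  refine le_trans (le_of_eq (Finset.prod_congr rfl fun i _ => rfl)) ?_
  have : ∀ i : Fin d, (Finset.Icc (-(⌈r*M⌉:ℤ)) (⌈r*M⌉:ℤ)).card ≤ 2 * (⌈r*M⌉).toNat + 1 := by
    intro i
    rw [Int.card_Icc]
    omega
  calc ∏ _i : Fin d, (Finset.Icc (-(⌈r*M⌉:ℤ)) (⌈r*M⌉:ℤ)).card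
      ≤ ∏ _i : Fin d, (2 * (⌈r*M⌉).toNat + 1) :=
        Finset.prod_le_prod (fun _ _ => Nat.zero_le _) (fun i _ => this i)
    _ = (2 * (⌈r*M⌉).toNat + 1) ^ d := by
        rw [Finset.prod_const]; simp

private lemma latR_empty (hM : ∀ b ∈ B, ‖b‖ ≤ M) {r : ℝ} (hr : 0 ≤ r) (h1 : r * M < 1) :
    latR d B r = ∅ := by
  ext x
  simp only [latR, Set.mem_setOf_eq, Set.mem_empty_iff_false, iff_false, not_and]
  intro hx hmem
  obtain ⟨i, hi⟩ := Function.ne_iff.mp hx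
  have hxi : x i ≠ 0 := fun h => hi (by simpa using h)
  have h2 : (1:ℝ) ≤ |(x i : ℝ)| := by
    have : (1:ℤ) ≤ |x i| := Int.one_le_abs hxi
    exact_mod_cast this
  have := coord_bound hM hr hmem i
  linarith
end comb

section comb2
variable {d : ℕ} {B : Set (Fin d → ℝ)} {M : ℝ}

private lemma prim_map_mem {k : ℕ} (hk : 0 < k) {r : ℝ} {y : Fin d → ℤ}
    (hy : y ∈ primR d B (r/k)) :
    (fun i => (k:ℤ) * y i) ∈ latR d B r ∧
    Finset.univ.gcd (fun i => (((k:ℤ) * y i)).natAbs) = k := by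
  obtain ⟨hy0, hyg, hym⟩ := hy
  have hk' : ((k:ℤ)) ≠ 0 := by exact_mod_cast hk.ne'
  refine ⟨⟨?_, (scale_mem B r hk y).mpr hym⟩, ?_⟩
  · intro h
    apply hy0
    funext i
    have h2 : (k:ℤ) * y i = 0 := by simpa using congrFun h i
    rcases mul_eq_zero.mp h2 with h3 | h3
    · exact absurd h3 hk'
    · simpa using h3
  · rw [gcd_smul' k y, hyg, mul_one]

private lemma partition_card (hM : ∀ b ∈ B, ‖b‖ ≤ M) (hM0 : 0 ≤ M) {r : ℝ} (hr : 0 < r)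
    (K : ℕ) (hK : r * M ≤ K) :
    (latR d B r).ncard = ∑ k ∈ Finset.Icc 1 K, (primR d B (r/k)).ncard := by
  classical
  set A : ℕ → Set (Fin d → ℤ) := fun k => (fun y => fun i => (k:ℤ) * y i) '' primR d B (r/k)
    with hA
  have hgcdA : ∀ k, 0 < k → ∀ x ∈ A k, Finset.univ.gcd (fun i => (x i).natAbs) = k := by
    rintro k hk x ⟨y, hy, rfl⟩
    exact (prim_map_mem hk hy).2
  have hcover : latR d B r = ⋃ k ∈ Finset.Icc 1 K, A k := by
    ext x
    simp only [Set.mem_iUnion, Finset.mem_Icc, exists_prop]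
    constructor
    · rintro ⟨hx0, hxm⟩
      set k := Finset.univ.gcd (fun i => (x i).natAbs) with hkdef
      obtain ⟨i₀, hi₀⟩ := Function.ne_iff.mp hx0
      have hxi₀ : x i₀ ≠ 0 := fun h => hi₀ (by simpa using h)
      have hk0 : k ≠ 0 := by
        intro h
        have := Finset.gcd_eq_zero_iff.mp h i₀ (Finset.mem_univ i₀)
        exact hxi₀ (Int.natAbs_eq_zero.mp this)
      have hkpos : 0 < k := Nat.pos_of_ne_zero hk0
      have hdvd : ∀ i, (k:ℤ) ∣ x i := by
        intro i
        have h1 : k ∣ (x i).natAbs := Finset.gcd_dvd (Finset.mem_univ i)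
        exact dvd_trans (Int.natCast_dvd_natCast.mpr h1) (Int.natAbs_dvd.mpr dvd_rfl)
      set y : Fin d → ℤ := fun i => x i / (k:ℤ) with hydef
      have hxy : x = fun i => (k:ℤ) * y i := by
        funext i
        exact (Int.mul_ediv_cancel' (hdvd i)).symm
      have hyne : y ≠ 0 := by
        intro h
        apply hxi₀
        have h2 : x i₀ = (k:ℤ) * y i₀ := congrFun hxy i₀
        rw [h2, h]
        simp
      have hgy : Finset.univ.gcd (fun i => (y i).natAbs) = 1 := by
        have h2 : k * 1 = k * Finset.univ.gcd (fun i => (y i).natAbs) := by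
          rw [mul_one]
          conv_lhs => rw [hkdef, hxy]
          exact gcd_smul' k y
        exact (Nat.eq_of_mul_eq_mul_left hkpos h2).symm
      have hkK : k ≤ K := by
        have h1 : (k:ℝ) ≤ ((x i₀).natAbs : ℝ) := by
          exact_mod_cast Nat.le_of_dvd (Int.natAbs_pos.mpr hxi₀)
            (Finset.gcd_dvd (f := fun i => (x i).natAbs) (Finset.mem_univ i₀))
        have h2 : ((x i₀).natAbs : ℝ) = |((x i₀ : ℤ) : ℝ)| := by
          rw [Nat.cast_natAbs]
          push_cast
          ring
        have h3 : |((x i₀ : ℤ) : ℝ)| ≤ r*M := coord_bound hM hr.le hxm i₀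
        have : (k:ℝ) ≤ (K:ℝ) := by
          rw [h2] at h1
          linarith
        exact_mod_cast this
      have hymem : y ∈ primR d B (r/k) := by
        refine ⟨hyne, hgy, (scale_mem B r hkpos y).mp ?_⟩
        have : (fun i => (((k:ℤ) * y i : ℤ) : ℝ)) = fun i => ((x i : ℤ) : ℝ) := by
          funext i
          rw [← congrFun hxy i]
        rw [this]
        exact hxm
      exact ⟨k, ⟨hkpos, hkK⟩, y, hymem, hxy.symm⟩
    · rintro ⟨k, ⟨hk1, _⟩, y, hy, rfl⟩
      exact (prim_map_mem hk1 hy).1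
  have hfin : ∀ k ∈ Finset.Icc 1 K, (A k).Finite := by
    intro k hk
    have hk1 := (Finset.mem_Icc.mp hk).1
    have : (0:ℝ) ≤ r / k := by positivity
    exact ((primR_finite hM this)).image _
  have hdisj : ∀ k ∈ Finset.Icc 1 K, ∀ l ∈ Finset.Icc 1 K, k ≠ l → Disjoint (A k) (A l) := by
    intro k hk l hl hne
    rw [Set.disjoint_left]
    intro x hxk hxl
    apply hne
    rw [← hgcdA k (Finset.mem_Icc.mp hk).1 x hxk, ← hgcdA l (Finset.mem_Icc.mp hl).1 x hxl]
  rw [hcover, ncard_biUnion' _ _ hfin hdisj]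
  apply Finset.sum_congr rfl
  intro k hk
  have hk1 := (Finset.mem_Icc.mp hk).1
  have hkz : ((k:ℤ)) ≠ 0 := by
    have : k ≠ 0 := by omega
    exact_mod_cast this
  apply Set.ncard_image_of_injective
  intro y y' h
  funext i
  exact mul_left_cancel₀ hkz (by simpa using congrFun h i)
end comb2


private lemma aux_musum (n : ℕ) : ∑ i ∈ n.divisors, ((μ i : ℤ) : ℝ) = if n = 1 then 1 else 0 := by
  have h := congrArg (fun f => f n) (moebius_mul_coe_zeta)
  simp only [coe_mul_zeta_apply, ArithmeticFunction.one_apply] at h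
  have : ((∑ i ∈ n.divisors, μ i : ℤ) : ℝ) = ((if n = 1 then 1 else 0 : ℤ) : ℝ) := by rw [h]
  push_cast at this
  exact this

section comb3
variable {d : ℕ} {B : Set (Fin d → ℝ)} {M : ℝ}

private lemma prim_vanish (hM : ∀ b ∈ B, ‖b‖ ≤ M) (hM0 : 0 ≤ M) {r : ℝ} (hr : 0 ≤ r)
    (h1 : r * M < 1) : (primR d B r).ncard = 0 := by
  have h2 : primR d B r = ∅ :=
    Set.eq_empty_of_subset_empty (latR_empty hM hr h1 ▸ primR_subset)
  rw [h2, Set.ncard_empty]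

private lemma inversion_card (hM : ∀ b ∈ B, ‖b‖ ≤ M) (hM1 : 1 ≤ M) {R : ℝ} (hR : 0 < R)
    (K : ℕ) (hK : R * M ≤ K) (hK1 : 1 ≤ K) :
    ((primR d B R).ncard : ℝ)
      = ∑ k ∈ Finset.Icc 1 K, ((μ k : ℤ) : ℝ) * ((latR d B (R/(k:ℕ))).ncard : ℝ) := by
  classical
  have hM0 : 0 ≤ M := le_trans zero_le_one hM1
  set G : ℕ → ℝ := fun n => ((primR d B (R/(n:ℕ))).ncard : ℝ) with hG
  have hGvanish : ∀ n : ℕ, K < n → G n = 0 := by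
    intro n hn
    have hn0 : 0 < n := lt_of_le_of_lt (Nat.zero_le K) hn
    have hnR : (0:ℝ) < n := by exact_mod_cast hn0
    have h1 : R / n * M < 1 := by
      rw [div_mul_eq_mul_div, div_lt_one hnR]
      calc R * M ≤ (K:ℝ) := hK
        _ < (n:ℝ) := by exact_mod_cast hn
    have := prim_vanish hM hM0 (by positivity : (0:ℝ) ≤ R / n) h1
    simpa [hG] using congrArg (fun m : ℕ => (m:ℝ)) this
  -- expand latR counts via partition
  have hstep1 : ∀ k ∈ Finset.Icc 1 K,
      ((latR d B (R/(k:ℕ))).ncard : ℝ) = ∑ m ∈ Finset.Icc 1 K, G (k * m) := by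
    intro k hk
    obtain ⟨hk1, hkK⟩ := Finset.mem_Icc.mp hk
    have hkR : (1:ℝ) ≤ (k:ℝ) := by exact_mod_cast hk1
    have hrk : (0:ℝ) < R / k := by positivity
    have hKk : (R/k) * M ≤ (K:ℝ) := by
      calc (R/k) * M ≤ R * M := by
            apply mul_le_mul_of_nonneg_right _ hM0
            rw [div_le_iff₀ (by linarith)]
            nlinarith
        _ ≤ K := hK
    have := partition_card hM hM0 hrk K hKk
    rw [this]
    push_cast
    apply Finset.sum_congr rfl
    intro m hm
    congr 2
    rw [div_div]
    congr 1
    push_cast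
    ring
  rw [Finset.sum_congr rfl fun k hk => by rw [hstep1 k hk]]
  -- double sum
  have hdouble : ∑ k ∈ Finset.Icc 1 K, ((μ k : ℤ) : ℝ) * (∑ m ∈ Finset.Icc 1 K, G (k * m))
      = ∑ p ∈ Finset.Icc 1 K ×ˢ Finset.Icc 1 K, ((μ p.1 : ℤ) : ℝ) * G (p.1 * p.2) := by
    rw [Finset.sum_product]
    apply Finset.sum_congr rfl
    intro k _
    rw [Finset.mul_sum]
  rw [hdouble]
  -- fiberwise
  have hmaps : ∀ p ∈ Finset.Icc 1 K ×ˢ Finset.Icc 1 K, p.1 * p.2 ∈ Finset.Icc 1 (K*K) := by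
    rintro ⟨k, m⟩ hp
    rw [Finset.mem_product] at hp
    obtain ⟨hk, hm⟩ := hp
    rw [Finset.mem_Icc] at hk hm ⊢
    exact ⟨Nat.one_le_iff_ne_zero.mpr (Nat.mul_ne_zero (by omega) (by omega)), Nat.mul_le_mul hk.2 hm.2⟩
  rw [← Finset.sum_fiberwise_of_maps_to hmaps (fun p => ((μ p.1 : ℤ) : ℝ) * G (p.1 * p.2))]
  have hinner : ∀ n ∈ Finset.Icc 1 (K*K),
      (∑ p ∈ (Finset.Icc 1 K ×ˢ Finset.Icc 1 K).filter (fun p => p.1 * p.2 = n),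
        ((μ p.1 : ℤ) : ℝ) * G (p.1 * p.2)) = if n = 1 then G n else 0 := by
    intro n hn
    obtain ⟨hn1, hnKK⟩ := Finset.mem_Icc.mp hn
    by_cases hnK : n ≤ K
    · have hfib : (Finset.Icc 1 K ×ˢ Finset.Icc 1 K).filter (fun p => p.1 * p.2 = n)
          = n.divisorsAntidiagonal := by
        ext ⟨a, b⟩
        simp only [Finset.mem_filter, Finset.mem_product, Finset.mem_Icc,
          Nat.mem_divisorsAntidiagonal]
        constructor
        · rintro ⟨⟨_, _⟩, hab⟩
          exact ⟨hab, by omega⟩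
        · rintro ⟨hab, hn0⟩
          have ha : a ∣ n := ⟨b, hab.symm⟩
          have hb : b ∣ n := ⟨a, by rw [← hab]; ring⟩
          have ha1 : 1 ≤ a := Nat.one_le_iff_ne_zero.mpr (by rintro rfl; simp at hab; omega)
          have hb1 : 1 ≤ b := Nat.one_le_iff_ne_zero.mpr (by rintro rfl; simp at hab; omega)
          have haK : a ≤ K := le_trans (Nat.le_of_dvd (by omega) ha) hnK
          have hbK : b ≤ K := le_trans (Nat.le_of_dvd (by omega) hb) hnK
          exact ⟨⟨⟨ha1, haK⟩, ⟨hb1, hbK⟩⟩, hab⟩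
      rw [hfib]
      have : ∀ p ∈ n.divisorsAntidiagonal, ((μ p.1 : ℤ) : ℝ) * G (p.1 * p.2)
          = ((μ p.1 : ℤ) : ℝ) * G n := by
        intro p hp
        rw [(Nat.mem_divisorsAntidiagonal.mp hp).1]
      rw [Finset.sum_congr rfl this]
      have := Nat.sum_divisorsAntidiagonal (fun i j => ((μ i : ℤ) : ℝ) * G n) (n := n)
      rw [this, ← Finset.sum_mul, aux_musum n]
      split <;> simp
    · push_neg at hnK
      have : ∀ p ∈ (Finset.Icc 1 K ×ˢ Finset.Icc 1 K).filter (fun p => p.1 * p.2 = n),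
          ((μ p.1 : ℤ) : ℝ) * G (p.1 * p.2) = 0 := by
        intro p hp
        rw [(Finset.mem_filter.mp hp).2, hGvanish n hnK, mul_zero]
      rw [Finset.sum_congr rfl this, Finset.sum_const_zero]
      rw [if_neg (by omega)]
  rw [Finset.sum_congr rfl hinner, Finset.sum_ite_eq' (Finset.Icc 1 (K*K)) 1 G]
  rw [if_pos (Finset.mem_Icc.mpr ⟨le_refl 1, by nlinarith⟩)]
  simp [hG]
end comb3

set_option maxHeartbeats 1000000 in
theorem stmt6 (d : ℕ) (hd : 2 ≤ d) (B : Set (Fin d → ℝ))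
    (hBm : MeasurableSet B) (hBb : Bornology.IsBounded B)
    (hstar : ∀ x ∈ B, ∀ t : ℝ, t ∈ Set.Icc (0 : ℝ) 1 → t • x ∈ B)
    (hvol : 0 < (volume B).toReal)
    (C₀ α β R₀ : ℝ) (hC₀ : 0 < C₀) (hα₁ : 1 < α) (hαd : α < d) (hβ : 0 ≤ β) (hR₀ : 2 ≤ R₀)
    (h0 : ∀ R ≥ R₀,
      |(Nat.card {x : Fin d → ℤ | (fun i => (x i : ℝ)) ∈ R • B} : ℝ)
        - (volume B).toReal * R ^ d| ≤ C₀ * R ^ α * Real.log R ^ β) :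
    ∃ C₁ : ℝ, ∀ R ≥ R₀,
      |(Nat.card {x : Fin d → ℤ | x ≠ 0 ∧ Finset.univ.gcd (fun i => (x i).natAbs) = 1 ∧
          (fun i => (x i : ℝ)) ∈ R • B} : ℝ)
        - ((volume B).toReal / (∑' n : ℕ, 1 / ((n : ℝ) + 1) ^ d)) * R ^ d|
        ≤ C₁ * R ^ α * Real.log R ^ β := by
  classical
  obtain ⟨M₀, hM₀⟩ := hBb.exists_norm_le
  set M : ℝ := max M₀ 1 with hMdef
  have hM : ∀ b ∈ B, ‖b‖ ≤ M := fun b hb => le_trans (hM₀ b hb) (le_max_left _ _)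
  have hM1 : 1 ≤ M := le_max_right _ _
  have hM0 : 0 ≤ M := le_trans zero_le_one hM1
  set V : ℝ := (volume B).toReal with hVdef
  set Z : ℝ := ∑' n : ℕ, 1 / ((n : ℝ) + 1) ^ d with hZdef
  have hZsum : Summable (fun n : ℕ => 1 / ((n:ℝ)+1) ^ d) := by
    have : Summable (fun n : ℕ => 1 / (n:ℝ) ^ d) := Real.summable_one_div_nat_pow.mpr (by omega)
    simpa using (summable_nat_add_iff 1).mpr this
  have hZ1 : 1 ≤ Z := by
    rw [hZdef]
    refine le_trans (le_of_eq ?_) (Summable.le_tsum hZsum 0 (fun i _ => by positivity))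
    norm_num
  have hZpos : 0 < Z := lt_of_lt_of_le one_pos hZ1
  set F : ℝ := ∑' k : ℕ, (μ k : ℝ) / (k:ℝ) ^ d with hFdef
  have hFZ : F * Z = 1 := aux_mz d hd
  have hF : F = 1 / Z := by rw [eq_div_iff hZpos.ne']; exact hFZ
  set Zα : ℝ := ∑' n : ℕ, 1 / (n:ℝ) ^ α with hZαdef
  have hZαsum : Summable (fun n : ℕ => 1 / (n:ℝ) ^ α) := Real.summable_one_div_nat_rpow.mpr hα₁
  have hZα0 : 0 ≤ Zα := tsum_nonneg (fun n => by positivity)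
  set cBox : ℝ := ((2 * (⌈R₀*M⌉).toNat + 1 : ℕ) : ℝ) ^ d with hcBoxdef
  have hcBox0 : 0 ≤ cBox := by positivity
  set c₃ : ℝ := cBox + V * R₀ ^ d with hc₃def
  have hV0 : 0 ≤ V := hvol.le
  have hc₃0 : 0 ≤ c₃ := by positivity
  have hlog2 : 0 < Real.log 2 := Real.log_pos one_lt_two
  set cL : ℝ := (Real.log 2) ^ (-β) with hcLdef
  have hcL0 : 0 < cL := Real.rpow_pos_of_pos hlog2 _
  refine ⟨C₀ * Zα + (1 + 2*M*c₃ + 2*V) * cL, ?_⟩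
  intro R hR
  have hR2 : (2:ℝ) ≤ R := le_trans hR₀ hR
  have hR1 : (1:ℝ) ≤ R := by linarith
  have hRpos : (0:ℝ) < R := by linarith
  have hR₀pos : (0:ℝ) < R₀ := by linarith
  -- the key quantity R^α * log R ^ β dominates R
  have hRdom : R ≤ cL * (R ^ α * Real.log R ^ β) := by
    have h1 : R ^ (1:ℝ) ≤ R ^ α := Real.rpow_le_rpow_of_exponent_le hR1 hα₁.le
    rw [Real.rpow_one] at h1
    have h2 : Real.log 2 ^ β ≤ Real.log R ^ β :=
      Real.rpow_le_rpow hlog2.le (Real.log_le_log two_pos hR2) hβ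
    have h3 : R * Real.log 2 ^ β ≤ R ^ α * Real.log R ^ β := by
      apply mul_le_mul h1 h2 (by positivity) (by positivity)
    have h4 : cL * (Real.log 2 ^ β) = 1 := by
      rw [hcLdef, ← Real.rpow_add hlog2]
      simp
    calc R = R * (cL * Real.log 2 ^ β) := by rw [h4, mul_one]
      _ = cL * (R * Real.log 2 ^ β) := by ring
      _ ≤ cL * (R ^ α * Real.log R ^ β) := by
          exact mul_le_mul_of_nonneg_left h3 hcL0.le
  set K : ℕ := ⌈R*M⌉₊ with hKdef
  set K₁ : ℕ := ⌊R/R₀⌋₊ with hK₁def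
  have hKr : R*M ≤ (K:ℕ) := Nat.le_ceil _
  have hRMge : (2:ℝ) ≤ R*M := by nlinarith
  have hK1 : 1 ≤ K := by
    rcases Nat.eq_zero_or_pos K with h | h
    · exfalso; rw [h] at hKr; push_cast at hKr; linarith
    · exact h
  have hRM' : R ≤ R*M := by
    have : R*1 ≤ R*M := mul_le_mul_of_nonneg_left hM1 hRpos.le
    linarith
  have hKR : R ≤ (K:ℝ) := le_trans hRM' hKr
  have hKub : (K:ℝ) ≤ 2*R*M := by
    have := Nat.ceil_lt_add_one (by positivity : (0:ℝ) ≤ R*M)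
    have h2 : (K:ℝ) < R*M + 1 := this
    linarith
  have hK₁r : (K₁:ℝ) ≤ R/R₀ := Nat.floor_le (by positivity)
  have hK₁1 : 1 ≤ K₁ := by
    apply Nat.le_floor
    rw [Nat.cast_one, le_div_iff₀ hR₀pos]
    linarith
  have hK₁K : K₁ ≤ K := by
    have h1 : (K₁:ℝ) ≤ (K:ℝ) := by
      calc (K₁:ℝ) ≤ R/R₀ := hK₁r
        _ ≤ R := div_le_self hRpos.le (by linarith)
        _ ≤ (K:ℝ) := hKR
    exact_mod_cast h1
  -- identify the target set with primR
  have hset : {x : Fin d → ℤ | x ≠ 0 ∧ Finset.univ.gcd (fun i => (x i).natAbs) = 1 ∧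
      (fun i => (x i : ℝ)) ∈ R • B} = primR d B R := rfl
  have htarget : (Nat.card {x : Fin d → ℤ | x ≠ 0 ∧ Finset.univ.gcd (fun i => (x i).natAbs) = 1 ∧
      (fun i => (x i : ℝ)) ∈ R • B} : ℝ) = ((primR d B R).ncard : ℝ) := by
    rw [hset, ← Nat.card_coe_set_eq]
  rw [htarget]
  -- inversion
  have hinv := inversion_card (B := B) hM hM1 hRpos K hKr hK1
  -- comparison between latF and latR counts
  have hlat : ∀ r : ℝ, 0 ≤ r → |((latR d B r).ncard : ℝ) - ((latF d B r).ncard : ℝ)| ≤ 1 := by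
    intro r hr
    have hfin := latF_finite (B := B) hM hr
    have hfinR := (hfin.subset (latR_subset (B := B) (r := r)))
    have h1 : (latR d B r).ncard ≤ (latF d B r).ncard :=
      Set.ncard_le_ncard (latR_subset (B := B) (r := r)) hfin
    have h2 : (latF d B r).ncard ≤ (latR d B r).ncard + 1 := by
      have hsub : latF d B r ⊆ latR d B r ∪ {0} := by
        intro x hx
        by_cases hx0 : x = 0
        · right; exact hx0
        · left; exact ⟨hx0, hx⟩
      calc (latF d B r).ncard ≤ (latR d B r ∪ {0}).ncard :=
            Set.ncard_le_ncard hsub (hfinR.union (Set.finite_singleton 0))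
        _ ≤ (latR d B r).ncard + ({0} : Set (Fin d → ℤ)).ncard := Set.ncard_union_le _ _
        _ = (latR d B r).ncard + 1 := by rw [Set.ncard_singleton]
    rw [abs_le]
    constructor <;> [skip; skip]
    · have := (Nat.cast_le (α := ℝ)).mpr h2; push_cast at this ⊢; linarith
    · have := (Nat.cast_le (α := ℝ)).mpr h1; push_cast at this ⊢; linarith
  -- h0 in latF form
  have h0' : ∀ r : ℝ, R₀ ≤ r → |((latF d B r).ncard : ℝ) - V * r ^ d| ≤ C₀ * r ^ α * Real.log r ^ β := by
    intro r hr
    have := h0 r hr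
    rw [← Nat.card_coe_set_eq]
    exact this
  set np : ℕ → ℝ := fun k => ((latR d B (R/(k:ℕ))).ncard : ℝ) with hnp
  have hRα0 : (0:ℝ) ≤ R ^ α := Real.rpow_nonneg hRpos.le _
  have hL0 : (0:ℝ) ≤ Real.log R ^ β := Real.rpow_nonneg (Real.log_nonneg hR1) _
  -- bound for k ≤ K₁
  have hA : ∀ k ∈ Finset.Icc 1 K₁, |np k - V*(R/(k:ℝ))^d|
      ≤ (C₀ * R ^ α * Real.log R ^ β) * (1/(k:ℝ)^α) + 1 := by
    intro k hk
    obtain ⟨hk1, hkK₁⟩ := Finset.mem_Icc.mp hk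
    have hk1R : (1:ℝ) ≤ (k:ℝ) := by exact_mod_cast hk1
    have hkpos : (0:ℝ) < (k:ℝ) := by linarith
    have hrk : R₀ ≤ R/(k:ℝ) := by
      rw [le_div_iff₀ hkpos]
      have h1 : (k:ℝ) ≤ R/R₀ := le_trans (by exact_mod_cast hkK₁) hK₁r
      rw [le_div_iff₀ hR₀pos] at h1
      linarith
    have hrkpos : (0:ℝ) < R/(k:ℝ) := by positivity
    have h1 := h0' (R/(k:ℝ)) hrk
    have h2 := hlat (R/(k:ℝ)) hrkpos.le
    have h3 : |np k - V*(R/(k:ℝ))^d| ≤ C₀ * (R/(k:ℝ)) ^ α * Real.log (R/(k:ℝ)) ^ β + 1 := by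
      have := abs_sub_abs_le_abs_sub (np k - V*(R/(k:ℝ))^d)
        (((latF d B (R/(k:ℝ))).ncard : ℝ) - V*(R/(k:ℝ))^d)
      calc |np k - V*(R/(k:ℝ))^d|
          ≤ |((latF d B (R/(k:ℝ))).ncard : ℝ) - V*(R/(k:ℝ))^d|
            + |np k - ((latF d B (R/(k:ℝ))).ncard : ℝ)| := by
            have habc := abs_sub_le (np k - V*(R/(k:ℝ))^d)
              (((latF d B (R/(k:ℝ))).ncard : ℝ) - V*(R/(k:ℝ))^d) 0
            have h5 : |np k - ((latF d B (R/(k:ℝ))).ncard : ℝ)|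
                = |(np k - V*(R/(k:ℝ))^d) - (((latF d B (R/(k:ℝ))).ncard : ℝ) - V*(R/(k:ℝ))^d)| := by
              congr 1
              ring
            rw [h5]
            have := abs_sub (np k - V*(R/(k:ℝ))^d) (((latF d B (R/(k:ℝ))).ncard : ℝ) - V*(R/(k:ℝ))^d)
            calc |np k - V*(R/(k:ℝ))^d|
                = |(((latF d B (R/(k:ℝ))).ncard : ℝ) - V*(R/(k:ℝ))^d)
                  + ((np k - V*(R/(k:ℝ))^d) - (((latF d B (R/(k:ℝ))).ncard : ℝ) - V*(R/(k:ℝ))^d))| := by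
                  congr 1
                  ring
              _ ≤ _ := abs_add_le _ _
        _ ≤ C₀ * (R/(k:ℝ)) ^ α * Real.log (R/(k:ℝ)) ^ β + 1 := by
            have h6 := h2
            rw [abs_sub_comm] at h6
            linarith [h1, h6]
    refine le_trans h3 ?_
    have hd1 : (R/(k:ℝ)) ^ α ≤ R ^ α * (1/(k:ℝ)^α) := by
      rw [Real.div_rpow hRpos.le hkpos.le]
      rw [div_eq_mul_one_div]
    have hd2 : Real.log (R/(k:ℝ)) ^ β ≤ Real.log R ^ β := by
      apply Real.rpow_le_rpow (Real.log_nonneg (by linarith)) _ hβ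
      exact Real.log_le_log hrkpos (div_le_self hRpos.le hk1R)
    have hk0 : (0:ℝ) ≤ (R/(k:ℝ)) ^ α := Real.rpow_nonneg hrkpos.le _
    have hstep : C₀ * (R/(k:ℝ)) ^ α * Real.log (R/(k:ℝ)) ^ β
        ≤ C₀ * (R ^ α * (1/(k:ℝ)^α)) * Real.log R ^ β := by
      apply mul_le_mul _ hd2 (Real.rpow_nonneg (Real.log_nonneg (by linarith)) _) _
      · exact mul_le_mul_of_nonneg_left hd1 hC₀.le
      · positivity
    calc C₀ * (R/(k:ℝ)) ^ α * Real.log (R/(k:ℝ)) ^ β + 1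
        ≤ C₀ * (R ^ α * (1/(k:ℝ)^α)) * Real.log R ^ β + 1 := by linarith
      _ = (C₀ * R ^ α * Real.log R ^ β) * (1/(k:ℝ)^α) + 1 := by ring
  -- bound for K₁ < k ≤ K
  have hB : ∀ k ∈ Finset.Ioc K₁ K, |np k - V*(R/(k:ℝ))^d| ≤ c₃ := by
    intro k hk
    obtain ⟨hkK₁, hkK⟩ := Finset.mem_Ioc.mp hk
    have hk1 : 1 ≤ k := by omega
    have hk1R : (1:ℝ) ≤ (k:ℝ) := by exact_mod_cast hk1
    have hkpos : (0:ℝ) < (k:ℝ) := by linarith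
    have hrkpos : (0:ℝ) < R/(k:ℝ) := by positivity
    have hrkR₀ : R/(k:ℝ) ≤ R₀ := by
      have h1 : R/R₀ < (K₁:ℝ) + 1 := Nat.lt_floor_add_one _
      have h2 : (K₁:ℝ) + 1 ≤ (k:ℝ) := by exact_mod_cast hkK₁
      rw [div_le_iff₀ hkpos]
      rw [div_lt_iff₀ hR₀pos] at h1
      have h3 : ((K₁:ℝ)+1)*R₀ ≤ (k:ℝ)*R₀ := mul_le_mul_of_nonneg_right h2 hR₀pos.le
      linarith
    have hnp1 : np k ≤ cBox := by
      have hle1 : (latR d B (R/(k:ℝ))).ncard ≤ (latF d B (R/(k:ℝ))).ncard :=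
        Set.ncard_le_ncard (latR_subset (B := B) (r := R/(k:ℝ))) (latF_finite hM hrkpos.le)
      have hle2 : Nat.card (latF d B (R/(k:ℝ))) ≤ (2 * (⌈(R/(k:ℝ))*M⌉).toNat + 1) ^ d :=
        latF_card hM hrkpos.le
      rw [Nat.card_coe_set_eq] at hle2
      have hceil : (⌈(R/(k:ℝ))*M⌉).toNat ≤ (⌈R₀*M⌉).toNat := by
        apply Int.toNat_le_toNat
        apply Int.ceil_le_ceil
        exact mul_le_mul_of_nonneg_right hrkR₀ hM0
      have hle3 : (2 * (⌈(R/(k:ℝ))*M⌉).toNat + 1) ^ d ≤ (2 * (⌈R₀*M⌉).toNat + 1) ^ d := by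
        apply Nat.pow_le_pow_left
        omega
      have : (latR d B (R/(k:ℝ))).ncard ≤ (2 * (⌈R₀*M⌉).toNat + 1) ^ d := by omega
      rw [hnp]
      have := (Nat.cast_le (α := ℝ)).mpr this
      exact le_trans this (le_of_eq (by rw [hcBoxdef]; push_cast; ring))
    have hnp0 : 0 ≤ np k := Nat.cast_nonneg _
    have hvk : V*(R/(k:ℝ))^d ≤ V * R₀^d := by
      apply mul_le_mul_of_nonneg_left _ hV0
      exact pow_le_pow_left₀ hrkpos.le hrkR₀ d
    have hvk0 : 0 ≤ V*(R/(k:ℝ))^d := by positivity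
    calc |np k - V*(R/(k:ℝ))^d| ≤ |np k| + |V*(R/(k:ℝ))^d| := abs_sub _ _
      _ = np k + V*(R/(k:ℝ))^d := by rw [abs_of_nonneg hnp0, abs_of_nonneg hvk0]
      _ ≤ cBox + V * R₀^d := by linarith
      _ = c₃ := hc₃def.symm
  -- identity splitting main difference
  have h1each : ∀ k ∈ Finset.Icc 1 K, ((μ k : ℤ):ℝ) * (np k - V*(R/(k:ℝ))^d)
      = ((μ k : ℤ):ℝ) * np k - V * R^d * (((μ k : ℤ):ℝ) / (k:ℝ)^d) := by
    intro k hk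
    have hk1 := (Finset.mem_Icc.mp hk).1
    have hkpos : (0:ℝ) < (k:ℝ) := by exact_mod_cast hk1
    rw [div_pow]
    field_simp
  have hsum1 : ∑ k ∈ Finset.Icc 1 K, ((μ k : ℤ):ℝ) * (np k - V*(R/(k:ℝ))^d)
      = (∑ k ∈ Finset.Icc 1 K, ((μ k : ℤ):ℝ) * np k)
        - V * R^d * (∑ k ∈ Finset.Icc 1 K, ((μ k : ℤ):ℝ) / (k:ℝ)^d) := by
    rw [Finset.sum_congr rfl h1each, Finset.sum_sub_distrib, ← Finset.mul_sum]
  have hid : ((primR d B R).ncard : ℝ) - V / Z * R ^ d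
      = (∑ k ∈ Finset.Icc 1 K, ((μ k : ℤ):ℝ) * (np k - V*(R/(k:ℝ))^d))
        + V * R^d * ((∑ k ∈ Finset.Icc 1 K, ((μ k : ℤ):ℝ) / (k:ℝ)^d) - F) := by
    rw [hinv, hsum1, hF]
    ring
  -- moebius partial sum compared with F
  have hmsum : ∑ k ∈ Finset.Icc 1 K, ((μ k : ℤ):ℝ) / (k:ℝ)^d
      = ∑ k ∈ Finset.range (K+1), ((μ k : ℤ):ℝ) / (k:ℝ)^d := by
    have h1 : Finset.range (K+1) = insert 0 (Finset.Icc 1 K) := by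
      ext a
      simp only [Finset.mem_range, Finset.mem_insert, Finset.mem_Icc]
      omega
    rw [h1, Finset.sum_insert (by simp)]
    simp
  have htailK := aux_mtail d (K+1) hd (by omega)
  have hS2 : |(∑ k ∈ Finset.Icc 1 K, ((μ k : ℤ):ℝ) / (k:ℝ)^d) - F| ≤ 2/((K:ℝ)+1)^(d-1) := by
    rw [hmsum, abs_sub_comm]
    have h2 : ((K+1:ℕ):ℝ) = (K:ℝ)+1 := by push_cast; ring
    rw [← h2]
    exact htailK
  have hpowR : (0:ℝ) < R^(d-1) := by positivity
  have hS2' : |V * R^d * ((∑ k ∈ Finset.Icc 1 K, ((μ k : ℤ):ℝ) / (k:ℝ)^d) - F)| ≤ 2*V*R := by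
    rw [abs_mul, abs_of_nonneg (by positivity : (0:ℝ) ≤ V * R^d)]
    have h3 : 2/((K:ℝ)+1)^(d-1) ≤ 2/R^(d-1) := by
      apply div_le_div_of_nonneg_left (by norm_num) hpowR
      apply pow_le_pow_left₀ hRpos.le
      linarith
    have h4 : |(∑ k ∈ Finset.Icc 1 K, ((μ k : ℤ):ℝ) / (k:ℝ)^d) - F| ≤ 2/R^(d-1) :=
      le_trans hS2 h3
    calc V * R^d * |(∑ k ∈ Finset.Icc 1 K, ((μ k : ℤ):ℝ) / (k:ℝ)^d) - F|
        ≤ V * R^d * (2/R^(d-1)) := mul_le_mul_of_nonneg_left h4 (by positivity)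
      _ = 2*V*R := by
          have hpow : R^d = R^(d-1)*R := by
            rw [← pow_succ]
            congr 1
            omega
          rw [hpow]
          field_simp
  -- absolute value of main sum
  have habs1 : |∑ k ∈ Finset.Icc 1 K, ((μ k : ℤ):ℝ) * (np k - V*(R/(k:ℝ))^d)|
      ≤ ∑ k ∈ Finset.Icc 1 K, |np k - V*(R/(k:ℝ))^d| := by
    refine le_trans (Finset.abs_sum_le_sum_abs _ _) ?_
    apply Finset.sum_le_sum
    intro k hk
    rw [abs_mul]
    have hμ : |((μ k : ℤ):ℝ)| ≤ 1 := by exact_mod_cast (abs_moebius_le_one (n := k))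
    exact mul_le_of_le_one_left (abs_nonneg _) hμ
  have hdisj' : Disjoint (Finset.Icc 1 K₁) (Finset.Ioc K₁ K) := by
    rw [Finset.disjoint_left]
    intro a ha hb
    rw [Finset.mem_Icc] at ha
    rw [Finset.mem_Ioc] at hb
    omega
  have hsplitsum : ∑ k ∈ Finset.Icc 1 K, |np k - V*(R/(k:ℝ))^d|
      = (∑ k ∈ Finset.Icc 1 K₁, |np k - V*(R/(k:ℝ))^d|)
        + ∑ k ∈ Finset.Ioc K₁ K, |np k - V*(R/(k:ℝ))^d| := by
    have hunion : Finset.Icc 1 K₁ ∪ Finset.Ioc K₁ K = Finset.Icc 1 K := by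
      ext a
      simp only [Finset.mem_union, Finset.mem_Icc, Finset.mem_Ioc]
      omega
    rw [← hunion, Finset.sum_union hdisj']
  have hK₁R : (K₁:ℝ) ≤ R := le_trans hK₁r (div_le_self hRpos.le (by linarith))
  have hApart : ∑ k ∈ Finset.Icc 1 K₁, |np k - V*(R/(k:ℝ))^d|
      ≤ C₀ * Zα * (R ^ α * Real.log R ^ β) + R := by
    have hsle : ∑ k ∈ Finset.Icc 1 K₁, 1/(k:ℝ)^α ≤ Zα := by
      have h1 : Finset.range (K₁+1) = insert 0 (Finset.Icc 1 K₁) := by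
        ext a
        simp only [Finset.mem_range, Finset.mem_insert, Finset.mem_Icc]
        omega
      have h2 : ∑ k ∈ Finset.Icc 1 K₁, 1/(k:ℝ)^α = ∑ k ∈ Finset.range (K₁+1), 1/(k:ℝ)^α := by
        rw [h1, Finset.sum_insert (by simp)]
        rw [Nat.cast_zero, Real.zero_rpow (by linarith : α ≠ 0)]
        simp
      rw [h2]
      exact Summable.sum_le_tsum (Finset.range (K₁+1)) (fun i _ => by positivity) hZαsum
    calc ∑ k ∈ Finset.Icc 1 K₁, |np k - V*(R/(k:ℝ))^d|
        ≤ ∑ k ∈ Finset.Icc 1 K₁, ((C₀ * R ^ α * Real.log R ^ β) * (1/(k:ℝ)^α) + 1) :=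
          Finset.sum_le_sum hA
      _ = (C₀ * R ^ α * Real.log R ^ β) * (∑ k ∈ Finset.Icc 1 K₁, 1/(k:ℝ)^α) + (K₁:ℝ) := by
          rw [Finset.sum_add_distrib, ← Finset.mul_sum, Finset.sum_const, Nat.card_Icc]
          simp
      _ ≤ (C₀ * R ^ α * Real.log R ^ β) * Zα + R := by
          have h5 : (C₀ * R ^ α * Real.log R ^ β) * (∑ k ∈ Finset.Icc 1 K₁, 1/(k:ℝ)^α)
              ≤ (C₀ * R ^ α * Real.log R ^ β) * Zα :=
            mul_le_mul_of_nonneg_left hsle (by positivity)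
          linarith
      _ = C₀ * Zα * (R ^ α * Real.log R ^ β) + R := by ring
  have hBpart : ∑ k ∈ Finset.Ioc K₁ K, |np k - V*(R/(k:ℝ))^d| ≤ 2*R*M*c₃ := by
    calc ∑ k ∈ Finset.Ioc K₁ K, |np k - V*(R/(k:ℝ))^d|
        ≤ ∑ _k ∈ Finset.Ioc K₁ K, c₃ := Finset.sum_le_sum hB
      _ = ((K - K₁:ℕ):ℝ) * c₃ := by
          rw [Finset.sum_const, Nat.card_Ioc]
          simp [nsmul_eq_mul]
      _ ≤ (K:ℝ) * c₃ := by
          apply mul_le_mul_of_nonneg_right _ hc₃0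
          exact_mod_cast Nat.sub_le K K₁
      _ ≤ 2*R*M*c₃ := mul_le_mul_of_nonneg_right hKub hc₃0
  -- final assembly
  rw [hid]
  calc |(∑ k ∈ Finset.Icc 1 K, ((μ k : ℤ):ℝ) * (np k - V*(R/(k:ℝ))^d))
        + V * R^d * ((∑ k ∈ Finset.Icc 1 K, ((μ k : ℤ):ℝ) / (k:ℝ)^d) - F)|
      ≤ |∑ k ∈ Finset.Icc 1 K, ((μ k : ℤ):ℝ) * (np k - V*(R/(k:ℝ))^d)|
        + |V * R^d * ((∑ k ∈ Finset.Icc 1 K, ((μ k : ℤ):ℝ) / (k:ℝ)^d) - F)| := abs_add_le _ _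
    _ ≤ (∑ k ∈ Finset.Icc 1 K, |np k - V*(R/(k:ℝ))^d|) + 2*V*R := by
        linarith [habs1, hS2']
    _ ≤ (C₀ * Zα * (R ^ α * Real.log R ^ β) + R + 2*R*M*c₃) + 2*V*R := by
        rw [hsplitsum]
        linarith [hApart, hBpart]
    _ = C₀ * Zα * (R ^ α * Real.log R ^ β) + (1 + 2*M*c₃ + 2*V) * R := by ring
    _ ≤ C₀ * Zα * (R ^ α * Real.log R ^ β)
        + (1 + 2*M*c₃ + 2*V) * (cL * (R ^ α * Real.log R ^ β)) := by
        have hco : (0:ℝ) ≤ 1 + 2*M*c₃ + 2*V := by positivity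
        have := mul_le_mul_of_nonneg_left hRdom hco
        linarith
    _ = (C₀ * Zα + (1 + 2*M*c₃ + 2*V) * cL) * R ^ α * Real.log R ^ β := by ring
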